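/- Lemma (eigenvector of M_3). Let ℓ, c, r_x, β > 0 and γ ∈ (0,1) with c·r_x < 1, ℓ·c·γ + c·r_x < 1 and (A_3 + B_3·β)² ≥ 4·ℓ·c·β·γ. Define v_1 := 2·c·r_x/(A_3 − B_3·β + √((A_3 − B_3·β)² + 4·c·r_x·β·(1 − A_3))). Then the vector (v_1, 1)ᵀ is an eigenvector of M_3 associated with the eigenvalue λ_3, i.e., M_3·(v_1, 1)ᵀ = λ_3·(v_1, 1)ᵀ. Moreover, for fixed ℓ, c, r_x, γ there exist constants K > 0 and β_0 > 0 such that |v_1 − r_x/(r_x + γℓ)| ≤ K·β for all β ∈ (0, β_0]. -/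

import Mathlib

noncomputable section

/-- `A₃ = ℓcγ + c r_x`. -/
def A3 (l c rx γ : ℝ) : ℝ := l * c * γ + c * rx

/-- `B₃ = 1 − c r_x`. -/
def B3 (c rx : ℝ) : ℝ := 1 - c * rx

/-- `λ₃ = −(A₃ + B₃β)/2 + (1/2)·√((A₃ + B₃β)² − 4ℓcβγ)`. -/
def lam3 (l c rx γ β : ℝ) : ℝ :=
  -(A3 l c rx γ + B3 c rx * β) / 2 +
    Real.sqrt ((A3 l c rx γ + B3 c rx * β) ^ 2 - 4 * l * c * β * γ) / 2

/-- The matrix `M₃` of the frozen-dual recursion. -/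
def M3 (l c rx γ β : ℝ) : Matrix (Fin 2) (Fin 2) ℝ :=
  !![-(l * c * γ) - c * rx, c * rx;
     β * (1 - l * c * γ - c * rx), -β + β * c * rx]

/-- `v₁`: first coordinate of the candidate eigenvector of `M₃`. -/
def v1val (l c rx γ β : ℝ) : ℝ :=
  2 * c * rx / (A3 l c rx γ - B3 c rx * β +
    Real.sqrt ((A3 l c rx γ - B3 c rx * β) ^ 2 + 4 * c * rx * β * (1 - A3 l c rx γ)))

set_option maxHeartbeats 1000000 in
/-- `(v₁, 1)ᵀ` is an eigenvector of `M₃` for the eigenvalue `λ₃`, and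
`v₁ = r_x/(r_x + γℓ) + O(β)` as `β → 0`. -/
theorem eigenvector_of_M3
    (l c rx γ : ℝ)
    (hl : 0 < l) (hc : 0 < c) (hrx : 0 < rx)
    (hγ : γ ∈ Set.Ioo (0 : ℝ) 1) (hcrx : c * rx < 1) (hA3 : l * c * γ + c * rx < 1) :
    (∀ β : ℝ, 0 < β →
      (A3 l c rx γ + B3 c rx * β) ^ 2 ≥ 4 * l * c * β * γ →
      (M3 l c rx γ β).mulVec ![v1val l c rx γ β, 1] =
        lam3 l c rx γ β • ![v1val l c rx γ β, 1]) ∧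
    ∃ K : ℝ, 0 < K ∧ ∃ β0 : ℝ, 0 < β0 ∧ ∀ β ∈ Set.Ioc (0 : ℝ) β0,
      |v1val l c rx γ β - rx / (rx + γ * l)| ≤ K * β := by
  obtain ⟨hγ0, hγ1⟩ := hγ
  constructor
  · -- the eigenvector identity
    intro β hβ _
    have hA : 0 < A3 l c rx γ := by unfold A3; positivity
    have hB : 0 < B3 c rx := by unfold B3; linarith
    have hA1 : A3 l c rx γ < 1 := hA3
    have h1A : (0:ℝ) < 1 - A3 l c rx γ := by linarith
    set s : ℝ := Real.sqrt ((A3 l c rx γ - B3 c rx * β) ^ 2 +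
      4 * c * rx * β * (1 - A3 l c rx γ)) with hsdef
    have hs0 : 0 ≤ s := Real.sqrt_nonneg _
    have hs2 : s ^ 2 = (A3 l c rx γ - B3 c rx * β) ^ 2 +
        4 * c * rx * β * (1 - A3 l c rx γ) := by
      rw [hsdef, Real.sq_sqrt]; positivity
    have hp : 0 < 4 * c * rx * β * (1 - A3 l c rx γ) := by positivity
    have hxs : |A3 l c rx γ - B3 c rx * β| < s := by
      rw [← Real.sqrt_sq_eq_abs, hsdef]
      exact Real.sqrt_lt_sqrt (sq_nonneg _) (by linarith)
    have hfpos : 0 < A3 l c rx γ - B3 c rx * β + s := by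
      have := neg_abs_le (A3 l c rx γ - B3 c rx * β); linarith
    have hlam : lam3 l c rx γ β = (-(A3 l c rx γ + B3 c rx * β) + s) / 2 := by
      unfold lam3
      rw [hsdef]
      have harg : (A3 l c rx γ + B3 c rx * β) ^ 2 - 4 * l * c * β * γ
          = (A3 l c rx γ - B3 c rx * β) ^ 2 + 4 * c * rx * β * (1 - A3 l c rx γ) := by
        unfold A3 B3; ring
      rw [harg]; ring
    have hv1 : v1val l c rx γ β = 2 * c * rx / (A3 l c rx γ - B3 c rx * β + s) := by
      rw [v1val, hsdef]
    funext i
    fin_cases i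
    · simp only [M3, Matrix.mulVec, dotProduct, Fin.sum_univ_two,
        Matrix.cons_val', Matrix.cons_val_zero, Matrix.cons_val_one, Matrix.head_cons,
        Matrix.empty_val', Matrix.cons_val_fin_one, Matrix.head_fin_const,
        Pi.smul_apply, smul_eq_mul, Matrix.cons_mulVec, Matrix.cons_dotProduct,
        Matrix.dotProduct_of_isEmpty, Fin.zero_eta, Fin.mk_one, Matrix.of_apply]
      rw [hv1, hlam]
      unfold A3 B3 at hfpos hs2 ⊢
      field_simp
      have hD : c * (l * γ + rx) - (1 - c * rx) * β + s ≠ 0 := by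
        intro h; apply hfpos.ne'; linear_combination h
      rw [div_add_one hD]; congr 1
      ring
    · simp only [M3, Matrix.mulVec, dotProduct, Fin.sum_univ_two,
        Matrix.cons_val', Matrix.cons_val_zero, Matrix.cons_val_one, Matrix.head_cons,
        Matrix.empty_val', Matrix.cons_val_fin_one, Matrix.head_fin_const,
        Pi.smul_apply, smul_eq_mul, Matrix.cons_mulVec, Matrix.cons_dotProduct,
        Matrix.dotProduct_of_isEmpty, Fin.zero_eta, Fin.mk_one, Matrix.of_apply]
      rw [hv1, hlam]
      unfold A3 B3 at hfpos hs2 ⊢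
      field_simp
      have hD : c * (l * γ + rx) - β * (1 - c * rx) + s ≠ 0 := by
        intro h; apply hfpos.ne'; linear_combination h
      rw [div_add' _ _ _ hD, mul_div_assoc', div_eq_iff hD]
      linear_combination (-1 : ℝ) * hs2
  · -- the asymptotic estimate for v₁
    set A := A3 l c rx γ with hAdef
    set B := B3 c rx with hBdef
    have hA : 0 < A := by rw [hAdef]; unfold A3; positivity
    have hB : 0 < B := by rw [hBdef]; unfold B3; linarith
    have hA1 : A < 1 := hA3
    have h1A : (0:ℝ) < 1 - A := by linarith
    have hNum : 0 < 2 * c * rx * B * A + 4 * c ^ 2 * rx ^ 2 * (1 - A) := by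
      have := mul_pos (mul_pos (mul_pos (mul_pos two_pos hc) hrx) hB) hA
      have := mul_pos (mul_pos (mul_pos (by positivity : (0:ℝ) < 4 * c ^ 2)
        (by positivity : (0:ℝ) < rx ^ 2)) h1A) one_pos
      nlinarith
    refine ⟨(2 * c * rx * B * A + 4 * c ^ 2 * rx ^ 2 * (1 - A)) / A ^ 3,
      div_pos hNum (pow_pos hA 3), A / (2 * B), div_pos hA (by linarith), ?_⟩
    rintro β ⟨hβ0, hββ0⟩
    set K := (2 * c * rx * B * A + 4 * c ^ 2 * rx ^ 2 * (1 - A)) / A ^ 3 with hKdef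
    have hKpos : 0 < K := div_pos hNum (pow_pos hA 3)
    have hKA : K * A ^ 3 = 2 * c * rx * B * A + 4 * c ^ 2 * rx ^ 2 * (1 - A) := by
      rw [hKdef]; field_simp
    have hKβ : K * β * A ^ 2 * A = (2 * c * rx * B * A + 4 * c ^ 2 * rx ^ 2 * (1 - A)) * β := by
      rw [← hKA]; ring
    have hBβ : B * β ≤ A / 2 := by
      have h := (le_div_iff₀ (by linarith : (0:ℝ) < 2 * B)).mp hββ0
      linarith [h]
    have hx2 : A / 2 ≤ A - B * β := by linarith
    have hxA : A - B * β ≤ A := by nlinarith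
    have hxpos : 0 < A - B * β := by linarith
    set x := A - B * β with hxdef
    set e := 4 * c * rx * (1 - A) * β / A with hedef
    have hepos : 0 < e := div_pos (by positivity) hA
    have heA : e * A = 4 * c * rx * (1 - A) * β := by rw [hedef]; field_simp
    set s := Real.sqrt (x ^ 2 + 4 * c * rx * β * (1 - A)) with hsdef
    have hs0 : 0 ≤ s := Real.sqrt_nonneg _
    have harg0 : 0 ≤ x ^ 2 + 4 * c * rx * β * (1 - A) := by positivity
    have hs2 : s ^ 2 = x ^ 2 + 4 * c * rx * β * (1 - A) := by
      rw [hsdef, Real.sq_sqrt harg0]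
    have hsl : x ≤ s := by
      rw [hsdef]
      calc x = Real.sqrt (x ^ 2) := by rw [Real.sqrt_sq hxpos.le]
      _ ≤ _ := Real.sqrt_le_sqrt (by nlinarith)
    have hsu : s ≤ x + e := by
      rw [hsdef]
      calc Real.sqrt (x ^ 2 + 4 * c * rx * β * (1 - A)) ≤ Real.sqrt ((x + e) ^ 2) := by
            apply Real.sqrt_le_sqrt
            nlinarith [sq_nonneg e, heA, mul_nonneg hepos.le (by linarith : (0:ℝ) ≤ 2 * x - A)]
      _ = x + e := Real.sqrt_sq (by linarith)
    have hfA : A ≤ x + s := by linarith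
    have hfpos : 0 < x + s := by linarith
    have hfu : x + s ≤ 2 * A + e := by linarith
    have hv1 : v1val l c rx γ β = 2 * c * rx / (x + s) := by
      rw [v1val, hsdef, hxdef, hAdef, hBdef]
    have htarget : rx / (rx + γ * l) = c * rx / A := by
      rw [hAdef]; unfold A3
      rw [div_eq_div_iff (by positivity) (by positivity)]
      ring
    clear_value A B K x e s
    rw [hv1, htarget, abs_sub_le_iff]
    have hKβpos : 0 ≤ K * β := by positivity
    have h2 : K * β * A ^ 2 ≤ K * β * ((x + s) * A) := by
      have := mul_le_mul_of_nonneg_right hfA hA.le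
      have := mul_le_mul_of_nonneg_left this hKβpos
      calc K * β * A ^ 2 = K * β * (A * A) := by ring
      _ ≤ K * β * ((x + s) * A) := this
    constructor
    · rw [div_sub_div _ _ hfpos.ne' hA.ne', div_le_iff₀ (by positivity)]
      have h1 : 2 * c * rx * A - c * rx * (x + s) ≤ 2 * c * rx * B * β := by
        nlinarith [hsl, mul_pos hc hrx]
      have h3' : (2 * c * rx * B * β) * A ≤ (K * β * A ^ 2) * A := by
        have hnn : 0 ≤ 4 * c ^ 2 * rx ^ 2 * (1 - A) * β := by positivity
        nlinarith [hKβ]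
      have h3 : 2 * c * rx * B * β ≤ K * β * A ^ 2 := le_of_mul_le_mul_right h3' hA
      linarith [h1, h3, h2]
    · rw [div_sub_div _ _ hA.ne' hfpos.ne', div_le_iff₀ (by positivity)]
      have h1 : c * rx * (x + s) - 2 * c * rx * A ≤ c * rx * e := by
        nlinarith [hfu, mul_pos hc hrx]
      have h3' : (c * rx * e) * A ≤ (K * β * A ^ 2) * A := by
        have hnn : 0 ≤ 2 * c * rx * B * A * β := by positivity
        nlinarith [hKβ, heA, mul_pos hc hrx]
      have h3 : c * rx * e ≤ K * β * A ^ 2 := le_of_mul_le_mul_right h3' hA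
      linarith [h1, h3, h2]
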